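/- Let C ∈ ℂ, let Ω ⊆ ℂ² be a nonempty connected open set on which x ≠ 0, x + C ≠ 0 and y ≠ 0, and let η : Ω → ℂ be holomorphic with η(x,y) ≠ 0 and ∂η/∂y ≠ 0 on Ω. Suppose that for all (x,y) ∈ Ω and all p ∈ ℂ: η_xx + 2p·η_xy + p²·η_yy + (1/(x·y²))·η_y = 1/((x+C)·η(x,y)²). Then C = 0 and there exists λ ∈ ℂ with λ³ = 1 such that η(x,y) = λ·y for all (x,y) ∈ Ω. -/

import Mathlib

/-- Partial derivative in the first variable of a function `ℂ × ℂ → ℂ`. -/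
noncomputable def cpX (η : ℂ × ℂ → ℂ) (q : ℂ × ℂ) : ℂ :=
  deriv (fun t => η (t, q.2)) q.1

/-- Partial derivative in the second variable of a function `ℂ × ℂ → ℂ`. -/
noncomputable def cpY (η : ℂ × ℂ → ℂ) (q : ℂ × ℂ) : ℂ :=
  deriv (fun t => η (q.1, t)) q.2

open Metric Set

/-- A function on a ball with zero derivative is constant. -/
lemma constOnBall {g : ℂ → ℂ} {c : ℂ} {r : ℝ}
    (hg : DifferentiableOn ℂ g (Metric.ball c r))
    (h' : ∀ z ∈ Metric.ball c r, deriv g z = 0) :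
    ∀ z ∈ Metric.ball c r, ∀ w ∈ Metric.ball c r, g z = g w := by
  intro z hz w hw
  refine (convex_ball c r).is_const_of_fderivWithin_eq_zero hg (fun u hu => ?_) hz hw
  rw [fderivWithin_of_isOpen Metric.isOpen_ball hu]
  apply ContinuousLinearMap.ext_ring
  rw [ContinuousLinearMap.zero_apply, fderiv_apply_one_eq_deriv, h' u hu]

lemma keyLocal (C : ℂ) (Ω : Set (ℂ × ℂ)) (hΩo : IsOpen Ω)
    (hx0 : ∀ q ∈ Ω, q.1 ≠ 0) (hxC : ∀ q ∈ Ω, q.1 + C ≠ 0) (hy0 : ∀ q ∈ Ω, q.2 ≠ 0)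
    (η : ℂ × ℂ → ℂ) (hη : DifferentiableOn ℂ η Ω)
    (hη0 : ∀ q ∈ Ω, η q ≠ 0) (hηy : ∀ q ∈ Ω, cpY η q ≠ 0)
    (hpde : ∀ q ∈ Ω, ∀ p : ℂ,
      cpX (cpX η) q + 2 * p * cpX (cpY η) q + p^2 * cpY (cpY η) q
        + (1 / (q.1 * q.2^2)) * cpY η q
      = 1 / ((q.1 + C) * (η q)^2)) (q₀ : ℂ × ℂ) (hq₀ : q₀ ∈ Ω) :
    ∃ b : ℂ, b^3 = 1 ∧ C = 0 ∧ ∃ ε > 0, Metric.ball q₀ ε ⊆ Ω ∧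
      ∀ q' ∈ Metric.ball q₀ ε, η q' = b * q'.2 := by
  obtain ⟨x₀, y₀⟩ := q₀
  -- coefficient extraction
  have hE2 : ∀ q ∈ Ω, cpY (cpY η) q = 0 := by
    intro q hq
    have h0 := hpde q hq 0
    have h1 := hpde q hq 1
    have hm := hpde q hq (-1)
    linear_combination (h1 + hm - 2*h0)/2
  have hE1 : ∀ q ∈ Ω, cpX (cpY η) q = 0 := by
    intro q hq
    have h1 := hpde q hq 1
    have hm := hpde q hq (-1)
    linear_combination (h1 - hm)/4
  have hE0 : ∀ q ∈ Ω, cpX (cpX η) q + (1 / (q.1 * q.2^2)) * cpY η q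
      = 1 / ((q.1 + C) * (η q)^2) := by
    intro q hq
    have h0 := hpde q hq 0
    linear_combination h0
  -- slice differentiability
  have hslY : ∀ x t : ℂ, (x, t) ∈ Ω → DifferentiableAt ℂ (fun s => η (x, s)) t := by
    intro x t ht
    have h1 : DifferentiableAt ℂ η (x, t) := hη.differentiableAt (hΩo.mem_nhds ht)
    have h2 : DifferentiableAt ℂ (fun s : ℂ => ((x, s) : ℂ × ℂ)) t :=
      (differentiableAt_const x).prodMk differentiableAt_id
    exact h1.comp t h2
  have hslX : ∀ t y : ℂ, (t, y) ∈ Ω → DifferentiableAt ℂ (fun s => η (s, y)) t := by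
    intro t y ht
    have h1 : DifferentiableAt ℂ η (t, y) := hη.differentiableAt (hΩo.mem_nhds ht)
    have h2 : DifferentiableAt ℂ (fun s : ℂ => ((s, y) : ℂ × ℂ)) t :=
      differentiableAt_id.prodMk (differentiableAt_const y)
    exact h1.comp t h2
  -- choose a polydisc
  obtain ⟨ε, hε, hball⟩ := Metric.isOpen_iff.1 hΩo (x₀, y₀) hq₀
  have hmem : ∀ {x y : ℂ}, x ∈ Metric.ball x₀ ε → y ∈ Metric.ball y₀ ε → (x, y) ∈ Ω := by
    intro x y hx hy
    exact hball (by rw [← ball_prod_same]; exact Set.mem_prod.2 ⟨hx, hy⟩)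
  have hy₀b : y₀ ∈ Metric.ball y₀ ε := Metric.mem_ball_self hε
  have hx₀b : x₀ ∈ Metric.ball x₀ ε := Metric.mem_ball_self hε
  -- slope function constant in y on slices
  have hbconst : ∀ x ∈ Metric.ball x₀ ε, ∀ t ∈ Metric.ball y₀ ε,
      cpY η (x, t) = cpY η (x, y₀) := by
    intro x hx t ht
    have hdo : DifferentiableOn ℂ (fun s => η (x, s)) (Metric.ball y₀ ε) :=
      fun s hs => (hslY x s (hmem hx hs)).differentiableWithinAt
    have han := hdo.analyticOnNhd Metric.isOpen_ball
    have hd : DifferentiableOn ℂ (deriv (fun s => η (x, s))) (Metric.ball y₀ ε) :=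
      han.deriv.differentiableOn
    have h' : ∀ z ∈ Metric.ball y₀ ε, deriv (deriv (fun s => η (x, s))) z = 0 :=
      fun z hz => hE2 (x, z) (hmem hx hz)
    exact constOnBall hd h' t ht y₀ hy₀b
  -- affine in y
  have haffine : ∀ x ∈ Metric.ball x₀ ε, ∀ t ∈ Metric.ball y₀ ε,
      η (x, t) = η (x, y₀) + cpY η (x, y₀) * (t - y₀) := by
    intro x hx t ht
    set c := cpY η (x, y₀) with hc
    have hdo : DifferentiableOn ℂ (fun s => η (x, s) - c * s) (Metric.ball y₀ ε) := by
      refine DifferentiableOn.sub (fun s hs => (hslY x s (hmem hx hs)).differentiableWithinAt) ?_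
      exact (differentiable_id.const_mul c).differentiableOn
    have h' : ∀ z ∈ Metric.ball y₀ ε, deriv (fun s => η (x, s) - c * s) z = 0 := by
      intro z hz
      have h1 : HasDerivAt (fun s => η (x, s)) (cpY η (x, z)) z :=
        (hslY x z (hmem hx hz)).hasDerivAt
      have h2 : HasDerivAt (fun s : ℂ => c * s) (c * 1) z := (hasDerivAt_id z).const_mul c
      have h3 := (h1.sub h2).deriv
      rw [show (fun s => η (x, s) - c * s) = ((fun s => η (x, s)) - fun s => c * s) from rfl,
        h3, hbconst x hx z hz]
      ring
    have := constOnBall hdo h' t ht y₀ hy₀b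
    linear_combination this
  set b₀ := cpY η (x₀, y₀) with hb₀def
  have hb₀ : b₀ ≠ 0 := hηy (x₀, y₀) hq₀
  -- the slope is constant in x as well
  have hy₁b : (y₀ + ((ε/2 : ℝ) : ℂ)) ∈ Metric.ball y₀ ε := by
    rw [Metric.mem_ball, dist_eq_norm]
    simp only [add_sub_cancel_left]
    rw [Complex.norm_real, Real.norm_eq_abs, abs_of_pos (by positivity)]
    linarith
  have hεne : ((ε/2 : ℝ) : ℂ) ≠ 0 := Complex.ofReal_ne_zero.2 (by positivity)
  have hbx : ∀ x ∈ Metric.ball x₀ ε, cpY η (x, y₀) = b₀ := by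
    have hrep : Set.EqOn (fun t => cpY η (t, y₀))
        (fun t => (η (t, y₀ + ((ε/2 : ℝ) : ℂ)) - η (t, y₀)) / ((ε/2 : ℝ) : ℂ))
        (Metric.ball x₀ ε) := by
      intro x hx
      have h := haffine x hx _ hy₁b
      show cpY η (x, y₀) = _
      rw [eq_div_iff hεne]
      linear_combination -h
    have hdo : DifferentiableOn ℂ (fun t => cpY η (t, y₀)) (Metric.ball x₀ ε) := by
      refine DifferentiableOn.congr ?_ hrep
      refine DifferentiableOn.div_const (DifferentiableOn.sub ?_ ?_) _
      · exact fun t ht => (hslX t _ (hmem ht hy₁b)).differentiableWithinAt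
      · exact fun t ht => (hslX t y₀ (hmem ht hy₀b)).differentiableWithinAt
    have h' : ∀ z ∈ Metric.ball x₀ ε, deriv (fun t => cpY η (t, y₀)) z = 0 :=
      fun z hz => hE1 (z, y₀) (hmem hz hy₀b)
    intro x hx
    exact constOnBall hdo h' x hx x₀ hx₀b
  -- η (x,y) = a x + b₀ y on the polydisc
  set a : ℂ → ℂ := fun x => η (x, y₀) - b₀ * y₀ with hadef
  have haff2 : ∀ x ∈ Metric.ball x₀ ε, ∀ t ∈ Metric.ball y₀ ε, η (x, t) = a x + b₀ * t := by
    intro x hx t ht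
    have h := haffine x hx t ht
    rw [hbx x hx] at h
    simp only [hadef]
    linear_combination h
  have hadiff : DifferentiableOn ℂ a (Metric.ball x₀ ε) := by
    refine DifferentiableOn.sub_const ?_ _
    exact fun t ht => (hslX t y₀ (hmem ht hy₀b)).differentiableWithinAt
  have ha' : DifferentiableOn ℂ (deriv a) (Metric.ball x₀ ε) :=
    (hadiff.analyticOnNhd Metric.isOpen_ball).deriv.differentiableOn
  have hcpX : ∀ x ∈ Metric.ball x₀ ε, ∀ y ∈ Metric.ball y₀ ε,
      cpX η (x, y) = deriv a x := by
    intro x hx y hy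
    have hev : (fun t => η (t, y)) =ᶠ[nhds x] (fun t => a t + b₀ * y) := by
      filter_upwards [Metric.isOpen_ball.mem_nhds hx] with t ht
      exact haff2 t ht y hy
    have := hev.deriv_eq
    rw [cpX, this]
    simp
  have hcpXX : ∀ x ∈ Metric.ball x₀ ε, ∀ y ∈ Metric.ball y₀ ε,
      cpX (cpX η) (x, y) = deriv (deriv a) x := by
    intro x hx y hy
    have hev : (fun t => cpX η (t, y)) =ᶠ[nhds x] deriv a := by
      filter_upwards [Metric.isOpen_ball.mem_nhds hx] with t ht
      exact hcpX t ht y hy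
    exact hev.deriv_eq
  -- main pointwise identity
  have hxy : ∀ x ∈ Metric.ball x₀ ε, a x = 0 ∧ (x + C) * b₀^3 = x := by
    intro x hx
    have hxne : x ≠ 0 := hx0 (x, y₀) (hmem hx hy₀b)
    have hsne : x + C ≠ 0 := hxC (x, y₀) (hmem hx hy₀b)
    set k := deriv (deriv a) x with hk
    set α := a x with hα
    have hpoly : ∀ y : ℂ, (k*x*y^2 + b₀) * ((x+C) * (α + b₀*y)^2) = x * y^2 := by
      have hFd : Differentiable ℂ (fun y : ℂ => (k*x*y^2 + b₀) * ((x+C) * (α + b₀*y)^2)) := by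
        fun_prop
      have hGd : Differentiable ℂ (fun y : ℂ => x * y^2) := by fun_prop
      have hFa := hFd.differentiableOn.analyticOnNhd isOpen_univ
      have hGa := hGd.differentiableOn.analyticOnNhd isOpen_univ
      have hev : (fun y : ℂ => (k*x*y^2 + b₀) * ((x+C) * (α + b₀*y)^2))
          =ᶠ[nhds y₀] (fun y : ℂ => x * y^2) := by
        filter_upwards [Metric.isOpen_ball.mem_nhds hy₀b] with t ht
        have hq : (x, t) ∈ Ω := hmem hx ht
        have h := hE0 (x, t) hq
        rw [hcpXX x hx t ht] at h
        have hyt : cpY η (x, t) = b₀ := by rw [hbconst x hx t ht, hbx x hx]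
        have hηt : η (x, t) = α + b₀ * t := haff2 x hx t ht
        rw [hηt] at h
        have hcy : cpY η (x, t) = b₀ := hyt
        rw [hcy] at h
        have htne : t ≠ 0 := hy0 (x, t) hq
        have hane : α + b₀ * t ≠ 0 := by rw [← hηt]; exact hη0 (x, t) hq
        have e1 : 1 / (x * t^2) * (x * t^2) = 1 :=
          one_div_mul_cancel (mul_ne_zero hxne (pow_ne_zero 2 htne))
        have e2 : 1 / ((x + C) * (α + b₀ * t)^2) * ((x + C) * (α + b₀ * t)^2) = 1 :=
          one_div_mul_cancel (mul_ne_zero hsne (pow_ne_zero 2 hane))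
        linear_combination (x * t^2 * ((x + C) * (α + b₀ * t)^2)) * h
          - b₀ * ((x + C) * (α + b₀ * t)^2) * e1 + x * t^2 * e2
      have := hFa.eqOn_of_preconnected_of_eventuallyEq hGa isPreconnected_univ
        (Set.mem_univ y₀) hev
      intro y
      exact this (Set.mem_univ y)
    have hα0 : α = 0 := by
      have h := hpoly 0
      have h' : b₀ * ((x + C) * α^2) = 0 := by linear_combination h
      rcases mul_eq_zero.1 h' with h'' | h''
      · exact absurd h'' hb₀
      rcases mul_eq_zero.1 h'' with h3 | h3
      · exact absurd h3 hsne
      · exact pow_eq_zero_iff two_ne_zero |>.1 h3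
    have h1 := hpoly 1
    have h2 := hpoly 2
    rw [hα0] at h1 h2
    have hkz : k * (x * ((x + C) * b₀^2)) = 0 := by linear_combination (h2 - 4*h1)/12
    have hk0 : k = 0 := by
      by_contra hkne
      exact (mul_ne_zero hkne (mul_ne_zero hxne (mul_ne_zero hsne (pow_ne_zero 2 hb₀)))) hkz
    rw [hk0] at h1
    exact ⟨hα0, by linear_combination h1⟩
  -- deduce b₀³ = 1 and C = 0
  have hx₂b : (x₀ + ((ε/2 : ℝ) : ℂ)) ∈ Metric.ball x₀ ε := by
    rw [Metric.mem_ball, dist_eq_norm]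
    simp only [add_sub_cancel_left]
    rw [Complex.norm_real, Real.norm_eq_abs, abs_of_pos (by positivity)]
    linarith
  have h1 := (hxy x₀ hx₀b).2
  have h2 := (hxy _ hx₂b).2
  have hb3 : b₀^3 = 1 := by
    have h3 : ((ε/2 : ℝ) : ℂ) * b₀^3 = ((ε/2 : ℝ) : ℂ) * 1 := by linear_combination h2 - h1
    exact mul_left_cancel₀ hεne h3
  have hC : C = 0 := by
    rw [hb3] at h1
    linear_combination h1
  refine ⟨b₀, hb3, hC, ε, hε, hball, ?_⟩
  rintro ⟨u, v⟩ hq'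
  rw [← ball_prod_same] at hq'
  obtain ⟨hu, hv⟩ := hq'
  have h := haff2 u hu v hv
  rw [(hxy u hu).1] at h
  simpa using h

/-- The Φ₃-symmetry pseudo-group of the Emden–Fowler equation
`y'' = 1/(x y²)` is `{(x,y) ↦ (x, λy) : λ³ = 1}`: any symmetry `x̄ = x + C`,
`ȳ = η(x,y)` has `C = 0` and `η(x,y) = λ y` with `λ³ = 1`. -/
theorem statement8 (C : ℂ) (Ω : Set (ℂ × ℂ)) (hΩo : IsOpen Ω) (hΩc : IsConnected Ω)
    (hx0 : ∀ q ∈ Ω, q.1 ≠ 0) (hxC : ∀ q ∈ Ω, q.1 + C ≠ 0) (hy0 : ∀ q ∈ Ω, q.2 ≠ 0)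
    (η : ℂ × ℂ → ℂ) (hη : DifferentiableOn ℂ η Ω)
    (hη0 : ∀ q ∈ Ω, η q ≠ 0) (hηy : ∀ q ∈ Ω, cpY η q ≠ 0)
    (hpde : ∀ q ∈ Ω, ∀ p : ℂ,
      cpX (cpX η) q + 2 * p * cpX (cpY η) q + p^2 * cpY (cpY η) q
        + (1 / (q.1 * q.2^2)) * cpY η q
      = 1 / ((q.1 + C) * (η q)^2)) :
    C = 0 ∧ ∃ l : ℂ, l^3 = 1 ∧ ∀ q ∈ Ω, η q = l * q.2 := by
  obtain ⟨q₀, hq₀⟩ := hΩc.nonempty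
  obtain ⟨b₀, hb3, hC, ε₀, hε₀, hsub₀, hval₀⟩ :=
    keyLocal C Ω hΩo hx0 hxC hy0 η hη hη0 hηy hpde q₀ hq₀
  refine ⟨hC, b₀, hb3, ?_⟩
  set A := {q : ℂ × ℂ | q ∈ Ω ∧ η q = b₀ * q.2} with hA
  set B := {q : ℂ × ℂ | q ∈ Ω ∧ η q ≠ b₀ * q.2} with hB
  have hAo : IsOpen A := by
    rw [Metric.isOpen_iff]
    rintro q ⟨hqΩ, hqv⟩
    obtain ⟨b, _, _, ε, hε, hsub, hval⟩ :=
      keyLocal C Ω hΩo hx0 hxC hy0 η hη hη0 hηy hpde q hqΩ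
    have hbb : b = b₀ := by
      have h := hval q (Metric.mem_ball_self hε)
      rw [hqv] at h
      exact (mul_right_cancel₀ (hy0 q hqΩ) h.symm)
    refine ⟨ε, hε, fun q' hq' => ⟨hsub hq', ?_⟩⟩
    rw [hval q' hq', hbb]
  have hBo : IsOpen B := by
    rw [Metric.isOpen_iff]
    rintro q ⟨hqΩ, hqv⟩
    obtain ⟨b, _, _, ε, hε, hsub, hval⟩ :=
      keyLocal C Ω hΩo hx0 hxC hy0 η hη hη0 hηy hpde q hqΩ
    have hbb : b ≠ b₀ := by
      intro h
      apply hqv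
      rw [hval q (Metric.mem_ball_self hε), h]
    refine ⟨ε, hε, fun q' hq' => ⟨hsub hq', ?_⟩⟩
    rw [hval q' hq']
    intro h
    exact hbb (mul_right_cancel₀ (hy0 q' (hsub hq')) h)
  have hdisj : Disjoint A B := by
    rw [Set.disjoint_left]
    rintro q ⟨_, h⟩ ⟨_, h'⟩
    exact h' h
  have hcover : Ω ⊆ A ∪ B := by
    intro q hq
    by_cases h : η q = b₀ * q.2
    · exact Or.inl ⟨hq, h⟩
    · exact Or.inr ⟨hq, h⟩
  rcases hΩc.isPreconnected.subset_or_subset hAo hBo hdisj hcover with h | h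
  · exact fun q hq => (h hq).2
  · exact absurd (hval₀ q₀ (Metric.mem_ball_self hε₀)) (h hq₀).2
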